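/- Let $q^{*k}$ be the unique equilibrium of the averaged food chain restricted to the first $k$ species. Then $q^{*k}$ is positive (i.e., all coordinates $q^{*k}_1, \ldots, q^{*k}_k > 0$) if and only if the last coordinate $q^{*k}_k > 0$. -/

import Mathlib

open Finset

/-- The Lotka–Volterra food chain per-capita growth rates, indexed by species `i ∈ {1,…,n}`. -/
noncomputable def Fchain (n : ℕ) (a : ℕ → ℕ → ℝ) (x : ℕ → ℝ) (i : ℕ) : ℝ :=
  if i = 1 then a 1 0 - a 1 1 * x 1 - a 1 2 * x 2
  else if i = n then -a n 0 + a n (n-1) * x (n-1) - a n n * x n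
  else -a i 0 + a i (i-1) * x (i-1) - a i i * x i - a i (i+1) * x (i+1)

/-- Sign conditions on the coefficients of the food chain. -/
structure FoodChainCoeffs (n : ℕ) (a : ℕ → ℕ → ℝ) : Prop where
  h10 : 0 < a 1 0
  h11 : 0 < a 1 1
  hdeath : ∀ i, 2 ≤ i → i ≤ n → 0 < a i 0
  hpred : ∀ i, 2 ≤ i → i ≤ n → 0 < a i (i-1)
  hhunt : ∀ i, 1 ≤ i → i < n → 0 < a i (i+1)
  hcomp : ∀ i, 1 ≤ i → i ≤ n → 0 ≤ a i i

/-- Weights `ε_1 = 1`, `ε_i = ∏_{k=2}^i a_{k-1,k}/a_{k,k-1}`. -/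
noncomputable def wt (a : ℕ → ℕ → ℝ) (i : ℕ) : ℝ :=
  ∏ k ∈ Finset.Icc 2 i, a (k-1) k / a k (k-1)

/-- The weighted total population `S(x) = ∑_{i=1}^n ε_i x_i`. -/
noncomputable def Sfun (n : ℕ) (a : ℕ → ℕ → ℝ) (x : ℕ → ℝ) : ℝ :=
  ∑ i ∈ Finset.Icc 1 n, wt a i * x i

/-- The food chain field restricted to `k` species, viewed on `Fin k → ℝ`;
coordinate `i : Fin k` is species `i.val + 1`. -/
noncomputable def Ffin (n : ℕ) (a : ℕ → ℕ → ℝ) (x : Fin n → ℝ) (i : Fin n) : ℝ :=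
  Fchain n a (fun j => if h : 1 ≤ j ∧ j ≤ n then x ⟨j - 1, by omega⟩ else 0) (i.val + 1)

/-- the equilibrium of the first `k` species is positive iff its last
coordinate is positive. -/
theorem stmt8 (k : ℕ) (hk : 2 ≤ k) (a : ℕ → ℕ → ℝ) (hc : FoodChainCoeffs k a)
    (qk : Fin k → ℝ) (hqk : ∀ i, Ffin k a qk i = 0) :
    (∀ i, 0 < qk i) ↔ 0 < qk ⟨k - 1, by omega⟩ := by
  have EQmid : ∀ j (h2 : 2 ≤ j) (hjk : j < k),
      a j (j-1) * qk ⟨j-2, by omega⟩ =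
        a j 0 + a j j * qk ⟨j-1, by omega⟩ + a j (j+1) * qk ⟨j, by omega⟩ := by
    intro j h2 hjk
    have heq := hqk ⟨j - 1, by omega⟩
    simp only [Ffin, Fchain] at heq
    rw [if_neg (by omega), if_neg (by omega)] at heq
    rw [dif_pos (by omega : 1 ≤ j - 1 + 1 - 1 ∧ j - 1 + 1 - 1 ≤ k),
        dif_pos (by omega : 1 ≤ j - 1 + 1 ∧ j - 1 + 1 ≤ k),
        dif_pos (by omega : 1 ≤ j - 1 + 1 + 1 ∧ j - 1 + 1 + 1 ≤ k)] at heq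
    have e1 : (⟨j - 1 + 1 - 1 - 1, by omega⟩ : Fin k) = ⟨j - 2, by omega⟩ :=
      Fin.mk_eq_mk.mpr (by omega)
    have e2 : (⟨j - 1 + 1 - 1, by omega⟩ : Fin k) = ⟨j - 1, by omega⟩ :=
      Fin.mk_eq_mk.mpr (by omega)
    have e3 : (⟨j - 1 + 1 + 1 - 1, by omega⟩ : Fin k) = ⟨j, by omega⟩ :=
      Fin.mk_eq_mk.mpr (by omega)
    rw [e1, e2, e3] at heq
    have n1 : j - 1 + 1 = j := by omega
    simp only [n1, Nat.add_sub_cancel] at heq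
    linarith
  have EQk : a k (k-1) * qk ⟨k-2, by omega⟩ = a k 0 + a k k * qk ⟨k-1, by omega⟩ := by
    have heq := hqk ⟨k - 1, by omega⟩
    simp only [Ffin, Fchain] at heq
    rw [if_neg (by omega), if_pos (by omega : k - 1 + 1 = k)] at heq
    rw [dif_pos (by omega : 1 ≤ k - 1 ∧ k - 1 ≤ k),
        dif_pos (by omega : 1 ≤ k ∧ k ≤ k)] at heq
    have e1 : (⟨k - 1 - 1, by omega⟩ : Fin k) = ⟨k - 2, by omega⟩ :=
      Fin.mk_eq_mk.mpr (by omega)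
    rw [e1] at heq
    linarith
  constructor
  · intro hall; exact hall _
  · intro hlast
    have key : ∀ m, ∀ hm : m < k, 0 < qk ⟨k - 1 - m, by omega⟩ := by
      intro m
      induction m using Nat.strong_induction_on with
      | _ m IH =>
        intro hm
        rcases Nat.eq_zero_or_pos m with rfl | hm1
        · simpa using hlast
        · rcases eq_or_lt_of_le (show 1 ≤ m from hm1) with h1 | h2
          · -- m = 1
            have e1 : (⟨k - 1 - m, by omega⟩ : Fin k) = ⟨k - 2, by omega⟩ :=
              Fin.mk_eq_mk.mpr (by omega)
            rw [e1]
            have hd := hc.hdeath k (by omega) le_rfl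
            have hp := hc.hpred k (by omega) le_rfl
            have hcc := hc.hcomp k (by omega) le_rfl
            by_contra hcon
            push_neg at hcon
            nlinarith [EQk, mul_nonpos_of_nonneg_of_nonpos hp.le hcon,
              mul_nonneg hcc hlast.le]
          · -- m ≥ 2, species j = k - m + 1
            have hE := EQmid (k - m + 1) (by omega) (by omega)
            have e1 : (⟨k - m + 1 - 2, by omega⟩ : Fin k) = ⟨k - 1 - m, by omega⟩ :=
              Fin.mk_eq_mk.mpr (by omega)
            have e2 : (⟨k - m + 1 - 1, by omega⟩ : Fin k) = ⟨k - 1 - (m-1), by omega⟩ :=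
              Fin.mk_eq_mk.mpr (by omega)
            have e3 : (⟨k - m + 1, by omega⟩ : Fin k) = ⟨k - 1 - (m-2), by omega⟩ :=
              Fin.mk_eq_mk.mpr (by omega)
            rw [e1, e2, e3] at hE
            have hx1 := IH (m - 1) (by omega) (by omega)
            have hx2 := IH (m - 2) (by omega) (by omega)
            have hd := hc.hdeath (k - m + 1) (by omega) (by omega)
            have hp := hc.hpred (k - m + 1) (by omega) (by omega)
            have hh := hc.hhunt (k - m + 1) (by omega) (by omega)
            have hcc := hc.hcomp (k - m + 1) (by omega) (by omega)
            by_contra hcon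
            push_neg at hcon
            nlinarith [hE, mul_nonpos_of_nonneg_of_nonpos hp.le hcon,
              mul_nonneg hcc hx1.le, mul_pos hh hx2]
    intro i
    have h := key (k - 1 - i.val) (by omega)
    have e : (⟨k - 1 - (k - 1 - i.val), by omega⟩ : Fin k) = i :=
      Fin.mk_eq_mk.mpr (by omega)
    rwa [e] at h
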